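/- Let E = W ⊕ V be a direct sum decomposition of a reflexive Banach space E with closed subspaces W and V, where the norm ‖·‖ of E is locally uniformly convex. For w ∈ W let f(w) denote the unique point v ∈ V minimizing v ↦ ‖w + v‖. Then f : W → V is continuous. -/

import Mathlib

/-- Let `E = W ⊕ V` be a topological direct sum decomposition of a reflexive Banach
space whose norm is locally uniformly convex. If `f w` is, for each `w ∈ W`, the unique
point of `V` minimizing `v ↦ ‖w + v‖`, then `f : W → V` is continuous. -/
theorem continuity_of_nearest_point_map
    {E : Type*} [NormedAddCommGroup E] [NormedSpace ℝ E] [CompleteSpace E]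
    (hrefl : Function.Surjective (NormedSpace.inclusionInDoubleDual ℝ E))
    (hLUR : ∀ (x₀ : E) (x : ℕ → E),
      Filter.Tendsto (fun n => 2 * (‖x₀‖ ^ 2 + ‖x n‖ ^ 2) - ‖x₀ + x n‖ ^ 2)
        Filter.atTop (nhds 0) →
      Filter.Tendsto (fun n => ‖x n - x₀‖) Filter.atTop (nhds 0))
    (W V : Submodule ℝ E) (hW : IsClosed (W : Set E)) (hVcl : IsClosed (V : Set E))
    (hcompl : IsCompl W V)
    (f : W → V)
    (hmin : ∀ w : W, ∀ v : V, ‖(w : E) + (f w : E)‖ ≤ ‖(w : E) + (v : E)‖)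
    (huniq : ∀ (w : W) (v : V),
      (∀ v' : V, ‖(w : E) + (v : E)‖ ≤ ‖(w : E) + (v' : E)‖) → v = f w) :
    Continuous f := by
  rw [continuous_iff_seqContinuous]
  intro u w₀ hu
  have huE : Filter.Tendsto (fun n => (u n : E)) Filter.atTop (nhds (w₀ : E)) :=
    (continuous_subtype_val.tendsto _).comp hu
  set ε : ℕ → ℝ := fun n => ‖(u n : E) - (w₀ : E)‖ with hεdef
  have hε : Filter.Tendsto ε Filter.atTop (nhds 0) :=
    tendsto_iff_norm_sub_tendsto_zero.mp huE
  set x : ℕ → E := fun n => (u n : E) + (f (u n) : E) with hxdef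
  set x₀ : E := (w₀ : E) + (f w₀ : E) with hx₀def
  -- upper and lower bounds on ‖x n‖
  have hub : ∀ n, ‖x n‖ ≤ ‖x₀‖ + ε n := by
    intro n
    calc ‖x n‖ ≤ ‖(u n : E) + (f w₀ : E)‖ := hmin (u n) (f w₀)
      _ = ‖x₀ + ((u n : E) - (w₀ : E))‖ := by congr 1; rw [hx₀def]; abel
      _ ≤ ‖x₀‖ + ε n := norm_add_le _ _
  have hlb : ∀ n, ‖x₀‖ ≤ ‖x n‖ + ε n := by
    intro n
    calc ‖x₀‖ ≤ ‖(w₀ : E) + (f (u n) : E)‖ := hmin w₀ (f (u n))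
      _ = ‖x n - ((u n : E) - (w₀ : E))‖ := by congr 1; rw [hxdef]; dsimp only; abel
      _ ≤ ‖x n‖ + ε n := by
          simpa [hεdef] using norm_sub_le (x n) ((u n : E) - (w₀ : E))
  have hnorm : Filter.Tendsto (fun n => ‖x n‖) Filter.atTop (nhds ‖x₀‖) := by
    have h1 : Filter.Tendsto (fun n => ‖x₀‖ - ε n) Filter.atTop (nhds ‖x₀‖) := by
      simpa using (tendsto_const_nhds (x := ‖x₀‖) (f := Filter.atTop (α := ℕ))).sub hε
    have h2 : Filter.Tendsto (fun n => ‖x₀‖ + ε n) Filter.atTop (nhds ‖x₀‖) := by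
      simpa using (tendsto_const_nhds (x := ‖x₀‖) (f := Filter.atTop (α := ℕ))).add hε
    exact tendsto_of_tendsto_of_tendsto_of_le_of_le h1 h2
      (fun n => by linarith [hlb n]) (fun n => hub n)
  -- lower bound on ‖x₀ + x n‖ via minimality at the midpoint
  have hmid : ∀ n, 2 * ‖x₀‖ - ε n ≤ ‖x₀ + x n‖ := by
    intro n
    have hv := hmin w₀ (((1:ℝ)/2) • (f w₀ + f (u n)))
    have hcoe : (((((1:ℝ)/2) • (f w₀ + f (u n))) : V) : E)
        = ((1:ℝ)/2) • ((f w₀ : E) + (f (u n) : E)) := by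
      push_cast; ring_nf
    rw [hcoe] at hv
    have key : 2 * ‖x₀‖ ≤ ‖(2:ℝ) • ((w₀ : E) + ((1:ℝ)/2) • ((f w₀ : E) + (f (u n) : E)))‖ := by
      rw [norm_smul]
      simp only [Real.norm_ofNat]
      linarith
    have heq : (2:ℝ) • ((w₀ : E) + ((1:ℝ)/2) • ((f w₀ : E) + (f (u n) : E)))
        = (x₀ + x n) - ((u n : E) - (w₀ : E)) := by
      rw [hx₀def, hxdef]; module
    rw [heq] at key
    have := norm_sub_le (x₀ + x n) ((u n : E) - (w₀ : E))
    simp only [hεdef]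
    linarith
  -- apply LUR
  have hg : Filter.Tendsto (fun n => 2 * (‖x₀‖ ^ 2 + ‖x n‖ ^ 2) - ‖x₀ + x n‖ ^ 2)
      Filter.atTop (nhds 0) := by
    have hH : Filter.Tendsto
        (fun n => 2 * (‖x₀‖ ^ 2 + ‖x n‖ ^ 2) - (max 0 (2 * ‖x₀‖ - ε n)) ^ 2)
        Filter.atTop (nhds (2 * (‖x₀‖ ^ 2 + ‖x₀‖ ^ 2) - (max 0 (2 * ‖x₀‖ - 0)) ^ 2)) := by
      exact ((tendsto_const_nhds.add (hnorm.pow 2)).const_mul 2).sub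
        ((tendsto_const_nhds.max (tendsto_const_nhds.sub hε)).pow 2)
    have hzero : 2 * (‖x₀‖ ^ 2 + ‖x₀‖ ^ 2) - (max 0 (2 * ‖x₀‖ - 0)) ^ 2 = 0 := by
      rw [sub_zero, max_eq_right (by positivity)]; ring
    rw [hzero] at hH
    refine squeeze_zero (fun n => ?_) (fun n => ?_) hH
    · nlinarith [norm_add_le x₀ (x n), norm_nonneg (x₀ + x n), norm_nonneg x₀, norm_nonneg (x n), sq_nonneg (‖x₀‖ - ‖x n‖)]
    · have h1 : max 0 (2 * ‖x₀‖ - ε n) ≤ ‖x₀ + x n‖ :=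
        max_le (norm_nonneg _) (hmid n)
      nlinarith [le_max_left (0:ℝ) (2 * ‖x₀‖ - ε n)]
  have hx := hLUR x₀ x hg
  -- conclude convergence of f ∘ u
  have hfE : Filter.Tendsto (fun n => ‖(f (u n) : E) - (f w₀ : E)‖) Filter.atTop (nhds 0) := by
    refine squeeze_zero (fun n => norm_nonneg _) (fun n => ?_) (by simpa using hx.add hε)
    calc ‖(f (u n) : E) - (f w₀ : E)‖ = ‖(x n - x₀) - ((u n : E) - (w₀ : E))‖ := by
          congr 1; rw [hxdef, hx₀def]; dsimp only; abel
      _ ≤ ‖x n - x₀‖ + ε n := by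
          simpa [hεdef] using norm_sub_le (x n - x₀) ((u n : E) - (w₀ : E))
  have : Filter.Tendsto (fun n => (f (u n) : E)) Filter.atTop (nhds (f w₀ : E)) :=
    tendsto_iff_norm_sub_tendsto_zero.mpr hfE
  rw [show (f ∘ u) = fun n => f (u n) from rfl]
  exact Topology.IsEmbedding.subtypeVal.tendsto_nhds_iff.mpr this
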